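/- arXiv:math/0607770 — 2 statements merged into one kernel-verified Lean document; each statement's English description precedes it below -/
import Mathlib

section
/- Let k ≥ 3 and let L_k be a p-symmetrical k-partition of V^(k). Then the (k-1)-partition p̂L_k (the collection of all (k-1)-projections of the classes of L_k) is itself p-symmetrical. -/
/-- A `k`-tuple of pairwise distinct elements of `V` (an element of `V^(k)`). -/
abbrev Tup (k : ℕ) (V : Type*) := Fin k ↪ V

/-- Delete the `i`-th coordinate of a `(k+1)`-tuple: the `i`-th `k`-projection `p̂_i`. -/
def projTup {V : Type*} {k : ℕ} (i : Fin (k + 1)) (α : Tup (k + 1) V) : Tup k V :=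
  ⟨α ∘ i.succAbove, α.injective.comp Fin.succAbove_right_injective⟩

/-- The `i`-th projection `p̂_i(U)` of a `(k+1)`-relation `U`. -/
def projSet {V : Type*} {k : ℕ} (i : Fin (k + 1)) (U : Set (Tup (k + 1) V)) :
    Set (Tup k V) :=
  projTup i '' U

/-- `p̂L`: the collection of all `k`-projections of the classes of `L`. -/
def pPart {V : Type*} {k : ℕ} (L : Set (Set (Tup (k + 1) V))) : Set (Set (Tup k V)) :=
  {S | ∃ U ∈ L, ∃ i : Fin (k + 1), S = projSet i U}

/-- `L` is p-symmetrical: any two projections of any two classes are equal or disjoint. -/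
def IsPSymm {V : Type*} {k : ℕ} (L : Set (Set (Tup (k + 1) V))) : Prop :=
  ∀ U ∈ L, ∀ U' ∈ L, ∀ i i' : Fin (k + 1),
    projSet i U = projSet i' U' ∨ Disjoint (projSet i U) (projSet i' U')

/-- Permute the coordinates of a tuple: `permTup π α = α ∘ π`. -/
def permTup {V : Type*} {k : ℕ} (π : Equiv.Perm (Fin k)) (α : Tup k V) : Tup k V :=
  π.toEmbedding.trans α

/-- `L` is s-symmetrical: permuting coordinates of a class yields a class. -/
def IsSSymm {V : Type*} {k : ℕ} (L : Set (Set (Tup k V))) : Prop :=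
  ∀ U ∈ L, ∀ π : Equiv.Perm (Fin k), (permTup π '' U) ∈ L

/-- Multiplicity of the `l`-tuple `β` in the multiprojection of `U` to the
(distinct) coordinate positions `w`. -/
noncomputable def multProj {V : Type*} {k l : ℕ} (U : Set (Tup k V)) (w : Fin l ↪ Fin k)
    (β : Tup l V) : ℕ :=
  {α ∈ U | w.trans α = β}.ncard

/-- A `k`-relation is mp-symmetrical if in each of its multiprojections every
occurring tuple occurs with the same multiplicity. -/
def IsMpSymmRel {V : Type*} {k : ℕ} (U : Set (Tup k V)) : Prop :=
  ∀ (l : ℕ) (w : Fin l ↪ Fin k) (β γ : Tup l V),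
    multProj U w β ≠ 0 → multProj U w γ ≠ 0 → multProj U w β = multProj U w γ

/-- `L` is mp-symmetrical if every class is. -/
def IsMpSymm {V : Type*} {k : ℕ} (L : Set (Set (Tup k V))) : Prop :=
  ∀ U ∈ L, IsMpSymmRel U

/-- A regular partition: s-, p- and mp-symmetrical. -/
def IsRegularPartition {V : Type*} {k : ℕ} (L : Set (Set (Tup (k + 1) V))) : Prop :=
  IsSSymm L ∧ IsPSymm L ∧ IsMpSymm L

/-- Two `(k+1)`-tuples are `q̂L`-related iff for each `i` their `i`-th projections lie
in the same class of `L`. -/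
def qRel {V : Type*} {k : ℕ} (L : Set (Set (Tup k V))) (α β : Tup (k + 1) V) : Prop :=
  ∀ i : Fin (k + 1), ∀ U ∈ L, (projTup i α ∈ U ↔ projTup i β ∈ U)

/-- `q̂L`: the `(k+1)`-partition assembled from the `k`-partition `L`. -/
def qPart {V : Type*} {k : ℕ} (L : Set (Set (Tup k V))) : Set (Set (Tup (k + 1) V)) :=
  {S | ∃ α : Tup (k + 1) V, S = {β | qRel L α β}}

/-- `α` and `β` are `i`-th projections, for the same `i`, of `(k+1)`-tuples lying in the
same class of `q̂L`. -/
def pqRelBase {V : Type*} {k : ℕ} (L : Set (Set (Tup k V))) (α β : Tup k V) : Prop :=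
  ∃ i : Fin (k + 1), ∃ α' β' : Tup (k + 1) V,
    projTup i α' = α ∧ projTup i β' = β ∧ qRel L α' β'

/-- `p̂q̂L`: the `k`-partition obtained by assembling `L` into `q̂L` and projecting back
(the generated equivalence of `pqRelBase`). -/
def pqPart {V : Type*} {k : ℕ} (L : Set (Set (Tup k V))) : Set (Set (Tup k V)) :=
  {S | ∃ α : Tup k V, S = {β | Relation.EqvGen (pqRelBase L) α β}}

/-- One-step reconstruction `q̂p̂(U)` of a `(k+1)`-relation from its projections. -/
def qpSet {V : Type*} {k : ℕ} (U : Set (Tup (k + 1) V)) : Set (Tup (k + 1) V) :=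
  {α | ∀ i : Fin (k + 1), projTup i α ∈ projSet i U}

/-- Iterated reconstruction `q̂^m p̂^m U` (deleting one coordinate at a time and
reassembling). -/
def qpIter (V : Type*) : (m : ℕ) → (k : ℕ) → Set (Tup k V) → Set (Tup k V)
  | 0, _, U => U
  | _ + 1, 0, U => U
  | m + 1, k + 1, U =>
      {α | ∀ i : Fin (k + 1), projTup i α ∈ qpIter V m k (projSet i U)}

/-- Iterated assembling `q̂^i L` of a `k`-partition. -/
def qIter (V : Type*) : (i : ℕ) → (k : ℕ) → Set (Set (Tup k V)) → Set (Set (Tup (k + i) V))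
  | 0, _, L => L
  | i + 1, k, L => qPart (qIter V i k L)

/-- `p̂^i M`: all projections of the classes of a `(k+i)`-partition onto `k`-element
(ordered) sets of coordinate positions. -/
def pIter {V : Type*} (i k : ℕ) (M : Set (Set (Tup (k + i) V))) : Set (Set (Tup k V)) :=
  {S | ∃ U ∈ M, ∃ w : Fin k ↪o Fin (k + i), S = (fun α => w.toEmbedding.trans α) '' U}

/-- The coordinatewise action of a permutation of `V` on tuples. -/
def actTup {V : Type*} {k : ℕ} (g : Equiv.Perm V) (α : Tup k V) : Tup k V :=
  α.trans g.toEmbedding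

/-- `Aut(L)`: the permutations of `V` preserving every class of `L`. -/
def AutP {V : Type*} {k : ℕ} (L : Set (Set (Tup k V))) : Set (Equiv.Perm V) :=
  {g | ∀ U ∈ L, actTup g '' U = U}

/-- The orbit of a tuple under a set of permutations. -/
def orbitOf {V : Type*} {k : ℕ} (G : Set (Equiv.Perm V)) (α : Tup k V) :
    Set (Tup k V) :=
  {β | ∃ g ∈ G, actTup g α = β}

/-- `L` is automorphic: its classes are exactly the orbits of `Aut(L)` on `V^(k)`. -/
def Automorphic {V : Type*} {k : ℕ} (L : Set (Set (Tup k V))) : Prop :=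
  ∀ S : Set (Tup k V), S ∈ L ↔ ∃ α : Tup k V, S = orbitOf (AutP L) α

/-- `Orb_k(G)`: the partition of `V^(k)` into orbits of the coordinatewise action of `G`. -/
def OrbPart {V : Type*} (k : ℕ) (G : Subgroup (Equiv.Perm V)) : Set (Set (Tup k V)) :=
  {S | ∃ α : Tup k V, S = orbitOf {g | g ∈ G} α}

lemma val_succAbove {n : ℕ} (p : Fin (n+1)) (x : Fin n) :
    (p.succAbove x : ℕ) = if (x:ℕ) < (p:ℕ) then (x:ℕ) else (x:ℕ)+1 := by
  rw [Fin.succAbove]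
  split_ifs with h h' h'
  · rfl
  · exact absurd h' (by simpa [Fin.lt_def] using h)
  · exact absurd (by simpa [Fin.lt_def] using h') h
  · rfl

lemma insertNth_injective {V : Type*} {n : ℕ} (p : Fin (n+1)) (x : V) (g : Fin n → V)
    (hg : Function.Injective g) (hx : x ∉ Set.range g) :
    Function.Injective (Fin.insertNth p x g) := by
  intro a b hab
  rcases eq_or_ne a p with rfl | ha
  · rcases eq_or_ne b a with rfl | hb
    · rfl
    · obtain ⟨j, rfl⟩ := Fin.exists_succAbove_eq hb
      rw [Fin.insertNth_apply_same, Fin.insertNth_apply_succAbove] at hab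
      exact absurd ⟨j, hab.symm⟩ hx
  · obtain ⟨j, rfl⟩ := Fin.exists_succAbove_eq ha
    rcases eq_or_ne b p with rfl | hb
    · rw [Fin.insertNth_apply_same, Fin.insertNth_apply_succAbove] at hab
      exact absurd ⟨j, hab⟩ hx
    · obtain ⟨j', rfl⟩ := Fin.exists_succAbove_eq hb
      rw [Fin.insertNth_apply_succAbove, Fin.insertNth_apply_succAbove] at hab
      rw [hg hab]

lemma merge {V : Type*} {k : ℕ} (γ γ' : Tup (k+1) V) (i i' : Fin (k+1))
    (hproj : projTup i γ = projTup i' γ') (hne : γ i ≠ γ' i') :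
    ∃ (δ : Tup (k+2) V) (c d : Fin (k+2)), projTup c δ = γ ∧ projTup d δ = γ' := by
  obtain ⟨c, hc⟩ : ∃ c : Fin (k+2), (c:ℕ) = if (i':ℕ) ≤ (i:ℕ) then (i':ℕ) else (i':ℕ)+1 := by
    split_ifs with h
    · exact ⟨i'.castSucc, by simp⟩
    · exact ⟨i'.succ, by simp⟩
  set d := c.succAbove i with hdd
  have hd : (d:ℕ) = if (i:ℕ) < (c:ℕ) then (i:ℕ) else (i:ℕ)+1 := val_succAbove c i
  have h1 : d.succAbove i' = c := by
    apply Fin.ext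
    rw [val_succAbove]
    split_ifs at hc hd ⊢ <;> omega
  have h2 : ∀ n : Fin k, d.succAbove (i'.succAbove n) = c.succAbove (i.succAbove n) := by
    intro n
    apply Fin.ext
    simp only [val_succAbove]
    split_ifs at hc hd ⊢ <;> omega
  have hxr : γ' i' ∉ Set.range ⇑γ := by
    rintro ⟨m, hm⟩
    rcases eq_or_ne m i with rfl | hmi
    · exact hne hm
    · obtain ⟨n, rfl⟩ := Fin.exists_succAbove_eq hmi
      have : γ (i.succAbove n) = γ' (i'.succAbove n) := DFunLike.congr_fun hproj n
      rw [hm] at this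
      exact Fin.succAbove_ne i' n (γ'.injective this.symm)
  refine ⟨⟨Fin.insertNth c (γ' i') ⇑γ, insertNth_injective _ _ _ γ.injective hxr⟩, c, d, ?_, ?_⟩
  · apply DFunLike.ext
    intro m
    simp only [projTup, Function.Embedding.coeFn_mk, Function.comp_apply]
    exact Fin.insertNth_apply_succAbove c _ _ m
  · apply DFunLike.ext
    intro m
    simp only [projTup, Function.Embedding.coeFn_mk, Function.comp_apply]
    rcases eq_or_ne m i' with rfl | hm
    · rw [h1, Fin.insertNth_apply_same]
    · obtain ⟨n, rfl⟩ := Fin.exists_succAbove_eq hm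
      rw [h2, Fin.insertNth_apply_succAbove]
      exact DFunLike.congr_fun hproj n

lemma double_proj_eq {V : Type*} {k : ℕ} (δ : Tup (k+2) V) (c d : Fin (k+2))
    (i i' : Fin (k+1)) (h : projTup i (projTup c δ) = projTup i' (projTup d δ))
    (W : Set (Tup (k+2) V)) :
    projSet i (projSet c W) = projSet i' (projSet d W) := by
  have key : ∀ x : Tup (k+2) V, projTup i (projTup c x) = projTup i' (projTup d x) := by
    intro x
    apply DFunLike.ext
    intro n
    show x (c.succAbove (i.succAbove n)) = x (d.succAbove (i'.succAbove n))
    congr 1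
    apply δ.injective
    exact DFunLike.congr_fun h n
  unfold projSet
  rw [Set.image_image, Set.image_image]
  exact congrFun (congrArg _ (funext key)) W

lemma link {V : Type*} {k : ℕ} (L : Set (Set (Tup (k+2) V))) (hL : Setoid.IsPartition L)
    (hp : IsPSymm L) {U U' : Set (Tup (k+1) V)} (hU : U ∈ pPart L) (hU' : U' ∈ pPart L)
    {γ γ' : Tup (k+1) V} (hγ : γ ∈ U) (hγ' : γ' ∈ U') (i i' : Fin (k+1))
    (hproj : projTup i γ = projTup i' γ') (hne : γ i ≠ γ' i') :
    projSet i U = projSet i' U' := by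
  obtain ⟨W, hW, j, rfl⟩ := hU
  obtain ⟨W', hW', j', rfl⟩ := hU'
  obtain ⟨δ, c, d, hδc, hδd⟩ := merge γ γ' i i' hproj hne
  obtain ⟨W'', ⟨hW'', hδW''⟩, -⟩ := hL.2 δ
  have e1 : projSet j W = projSet c W'' := by
    rcases hp W hW W'' hW'' j c with h | h
    · exact h
    · exact absurd (Set.disjoint_left.mp h hγ ⟨δ, hδW'', hδc⟩) (fun f => f)
  have e2 : projSet j' W' = projSet d W'' := by
    rcases hp W' hW' W'' hW'' j' d with h | h
    · exact h
    · exact absurd (Set.disjoint_left.mp h hγ' ⟨δ, hδW'', hδd⟩) (fun f => f)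
  rw [e1, e2]
  exact double_proj_eq δ c d i i' (by rw [hδc, hδd]; exact hproj) W''

/-- If `k ≥ 3` and `L` is a p-symmetrical `k`-partition of `V^(k)`
(here the paper's `k` is `k + 2`), then the `(k-1)`-partition `p̂L` is p-symmetrical. -/
theorem pPart_isPSymm_of_isPSymm {V : Type*} [Fintype V] (k : ℕ) (hk : 3 ≤ k + 2)
    (L : Set (Set (Tup (k + 2) V))) (hL : Setoid.IsPartition L) (hp : IsPSymm L) :
    IsPSymm (pPart L) := by
  intro U hU U' hU' i i'
  by_cases hdis : Disjoint (projSet i U) (projSet i' U')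
  · exact Or.inr hdis
  left
  obtain ⟨β, ⟨γ, hγU, hγ⟩, ⟨γ', hγ'U, hγ'⟩⟩ := Set.not_disjoint_iff.mp hdis
  by_cases hv : γ i = γ' i'
  · have hcard : k + 2 ≤ Fintype.card V := by
      obtain ⟨W, hW, j, hUW⟩ := hU
      rw [hUW] at hγU
      obtain ⟨δ, hδ, -⟩ := hγU
      exact (by simpa using Fintype.card_le_of_embedding δ : k + 1 < Fintype.card V)
    have fresh : ∀ τ : Tup (k+1) V, ∃ u, u ∉ Set.range ⇑τ := by
      intro τ
      by_contra hno
      push_neg at hno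
      have : Fintype.card V ≤ k + 1 := by
        simpa using Fintype.card_le_of_surjective ⇑τ (fun v => hno v)
      omega
    obtain ⟨u, hu⟩ := fresh γ
    have huβ : u ∉ Set.range ⇑β := by
      rw [← hγ]
      rintro ⟨n, hn⟩
      exact hu ⟨i.succAbove n, hn⟩
    set γ'' : Tup (k+1) V :=
      ⟨Fin.insertNth i' u ⇑β, insertNth_injective _ _ _ β.injective huβ⟩ with hγ''def
    have hproj'' : projTup i' γ'' = β := by
      apply DFunLike.ext
      intro n
      simp only [projTup, Function.Embedding.coeFn_mk, Function.comp_apply, hγ''def]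
      exact Fin.insertNth_apply_succAbove _ _ _ _
    have hγ''i' : γ'' i' = u := by
      simp only [hγ''def, Function.Embedding.coeFn_mk]
      exact Fin.insertNth_apply_same _ _ _
    obtain ⟨u₂, hu₂⟩ := fresh γ''
    set δ₀ : Tup (k+2) V :=
      ⟨Fin.insertNth 0 u₂ ⇑γ'', insertNth_injective _ _ _ γ''.injective hu₂⟩ with hδ₀def
    have hδ₀ : projTup 0 δ₀ = γ'' := by
      apply DFunLike.ext
      intro n
      simp only [projTup, Function.Embedding.coeFn_mk, Function.comp_apply, hδ₀def]
      exact Fin.insertNth_apply_succAbove _ _ _ _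
    obtain ⟨W₀, ⟨hW₀, hδ₀W⟩, -⟩ := hL.2 δ₀
    have hY : projSet 0 W₀ ∈ pPart L := ⟨W₀, hW₀, 0, rfl⟩
    have hγ''Y : γ'' ∈ projSet 0 W₀ := ⟨δ₀, hδ₀W, hδ₀⟩
    have h1 := link L hL hp hU hY hγU hγ''Y i i' (by rw [hγ, hproj''])
      (by rw [hγ''i']; intro h; exact hu ⟨i, h⟩)
    have h2 := link L hL hp hU' hY hγ'U hγ''Y i' i' (by rw [hγ', hproj''])
      (by rw [hγ''i']; intro h; exact hu ⟨i, hv.trans h⟩)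
    rw [h1, h2]
  · exact link L hL hp hU hU' hγU hγ'U i i' (by rw [hγ, hγ']) hv
end

section
/- Let G be a group of permutations of a finite set V with |V| = n and let k ≤ n. Then G is k-closed (i.e. Aut(Orb_k(G)) = G) if and only if the n-orbit partition Orb_n(G) of V^(n) is k-full, i.e. (q̂p̂)-reconstruction from k-projections recovers every class: q̂^{n−k} p̂^{n−k} U = U for every orbit U of G on V^(n). -/
section KClosedAux

variable {V : Type*}

private lemma tup_ext {k : ℕ} {α β : Tup k V} (h : ∀ j, α j = β j) : α = β :=
  DFunLike.ext _ _ h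

/-- Lemma A: membership in `qpIter` is equivalent to all order-embedded subtuples lying in
the corresponding projections. -/
private lemma mem_qpIter_iff (k : ℕ) : ∀ (m N : ℕ), k + m = N →
    ∀ (U : Set (Tup N V)) (α : Tup N V),
    (α ∈ qpIter V m N U ↔ ∀ w : Fin k ↪o Fin N,
      w.toEmbedding.trans α ∈ (fun β : Tup N V => w.toEmbedding.trans β) '' U)
  | 0, N, h, U, α => by
      subst h
      show α ∈ U ↔ _
      constructor
      · intro hα w
        exact ⟨α, hα, rfl⟩
      · intro h'
        obtain ⟨β, hβ, hβα⟩ := h' ((OrderIso.refl (Fin (k + 0))).toOrderEmbedding)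
        have : β = α := by
          apply tup_ext
          intro j
          have := congrArg (fun e : Tup (k + 0) V => (e : Fin (k + 0) → V) j) hβα
          exact this
        rwa [this] at hβ
  | (m+1), N, h, U, α => by
      subst h
      show (∀ i : Fin (k + m + 1), projTup i α ∈ qpIter V m (k + m) (projSet i U)) ↔ _
      constructor
      · intro hα w'
        have hns : ∃ i, ∀ j, w' j ≠ i := by
          by_contra hc
          push_neg at hc
          have hsurj : Function.Surjective w' := fun i => hc i
          have := Fintype.card_le_of_surjective _ hsurj
          simp only [Fintype.card_fin] at this
          omega
        obtain ⟨i, hi⟩ := hns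
        choose f hf using fun j => Fin.exists_succAbove_eq (hi j)
        have hmono : StrictMono f := by
          intro a b hab
          have h1 : i.succAbove (f a) < i.succAbove (f b) := by
            rw [hf, hf]; exact w'.strictMono hab
          exact (Fin.strictMono_succAbove i).lt_iff_lt.mp h1
        have h1 := (mem_qpIter_iff k m (k + m) rfl (projSet i U) (projTup i α)).mp (hα i)
        obtain ⟨β, hβU, hβ⟩ := h1 (OrderEmbedding.ofStrictMono f hmono)
        obtain ⟨γ, hγU, rfl⟩ := hβU
        refine ⟨γ, hγU, ?_⟩
        apply tup_ext
        intro j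
        have h2 := congrArg (fun e : Tup k V => (e : Fin k → V) j) hβ
        simp only [Function.Embedding.trans_apply] at h2 ⊢
        have h3 : (projTup i γ) ((OrderEmbedding.ofStrictMono f hmono).toEmbedding j) = γ (w' j) := by
          show γ (i.succAbove (f j)) = γ (w' j)
          rw [hf j]
        have h4 : (projTup i α) ((OrderEmbedding.ofStrictMono f hmono).toEmbedding j) = α (w' j) := by
          show α (i.succAbove (f j)) = α (w' j)
          rw [hf j]
        exact h3.symm.trans (h2.trans h4)
      · intro h' i
        rw [mem_qpIter_iff k m (k + m) rfl]
        intro w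
        set w' : Fin k ↪o Fin (k + m + 1) := w.trans (Fin.succAboveOrderEmb i) with hw'
        obtain ⟨γ, hγU, hγ⟩ := h' w'
        refine ⟨projTup i γ, ⟨γ, hγU, rfl⟩, ?_⟩
        apply tup_ext
        intro j
        have h2 := congrArg (fun e : Tup k V => (e : Fin k → V) j) hγ
        simp only [Function.Embedding.trans_apply] at h2 ⊢
        exact h2

/-- Lemma B: `U ⊆ qpIter V m N U`. -/
private lemma subset_qpIter : ∀ (m N : ℕ) (U : Set (Tup N V)), U ⊆ qpIter V m N U
  | 0, _, _ => subset_rfl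
  | _+1, 0, _ => subset_rfl
  | m+1, N+1, U => fun α hα i => subset_qpIter m N (projSet i U) ⟨α, hα, rfl⟩

variable (G : Subgroup (Equiv.Perm V))

private lemma actTup_actTup {k : ℕ} (g h : Equiv.Perm V) (α : Tup k V) :
    actTup g (actTup h α) = actTup (g * h) α := rfl

private lemma trans_actTup {k N : ℕ} (w : Fin k ↪ Fin N) (g : Equiv.Perm V) (α : Tup N V) :
    w.trans (actTup g α) = actTup g (w.trans α) := rfl

private lemma orbit_eq_of_mem {k : ℕ} {α β : Tup k V}
    (hβ : β ∈ orbitOf {g | g ∈ G} α) : orbitOf {g | g ∈ G} β = orbitOf {g | g ∈ G} α := by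
  obtain ⟨g, hg, rfl⟩ := hβ
  ext γ
  constructor
  · rintro ⟨h, hh, rfl⟩
    exact ⟨h * g, show h * g ∈ G from mul_mem hh hg, (actTup_actTup h g α).symm⟩
  · rintro ⟨h, hh, rfl⟩
    refine ⟨h * g⁻¹, show h * g⁻¹ ∈ G from mul_mem hh (inv_mem hg), ?_⟩
    rw [actTup_actTup, mul_assoc, inv_mul_cancel, mul_one]

private lemma image_trans_orbit {k N : ℕ} (w : Fin k ↪ Fin N) (α : Tup N V) :
    (fun β : Tup N V => w.trans β) '' orbitOf {g | g ∈ G} α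
      = orbitOf {g | g ∈ G} (w.trans α) := by
  ext γ
  constructor
  · rintro ⟨β, ⟨g, hg, rfl⟩, rfl⟩
    exact ⟨g, hg, (trans_actTup w g α).symm⟩
  · rintro ⟨g, hg, rfl⟩
    exact ⟨actTup g α, ⟨g, hg, rfl⟩, trans_actTup w g α⟩

private lemma mem_orbit_self {k : ℕ} (α : Tup k V) : α ∈ orbitOf {g | g ∈ G} α :=
  ⟨1, show (1 : Equiv.Perm V) ∈ G from one_mem G, tup_ext fun _ => rfl⟩

private lemma actTup_injective {k : ℕ} (g : Equiv.Perm V) :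
    Function.Injective (actTup g : Tup k V → Tup k V) := by
  intro x y hxy
  apply tup_ext
  intro j
  have := congrArg (fun e : Tup k V => (e : Fin k → V) j) hxy
  exact g.injective this

private lemma mem_G_autP {k : ℕ} (g : Equiv.Perm V) (hg : g ∈ G) :
    g ∈ AutP (OrbPart k G) := by
  rintro S ⟨β₀, rfl⟩
  ext γ
  constructor
  · rintro ⟨β, ⟨h, hh, rfl⟩, rfl⟩
    exact ⟨g * h, show g * h ∈ G from mul_mem hg hh, (actTup_actTup g h β₀).symm⟩
  · rintro ⟨h, hh, rfl⟩
    exact ⟨actTup (g⁻¹ * h) β₀, ⟨g⁻¹ * h, show g⁻¹ * h ∈ G from mul_mem (inv_mem hg) hh, rfl⟩, by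
      rw [actTup_actTup, ← mul_assoc, mul_inv_cancel, one_mul]⟩

end KClosedAux

/-- A permutation group `G` on `V`, `|V| = n ≥ k`, is `k`-closed
(`Aut(Orb_k(G)) = G`) iff every class of `Orb_n(G)` is `k`-full
(`q̂^{n−k} p̂^{n−k} U = U`). -/
theorem kClosed_iff_orb_card_full {V : Type*} [Fintype V] (k : ℕ)
    (hk : k ≤ Fintype.card V) (G : Subgroup (Equiv.Perm V)) :
    (∀ g : Equiv.Perm V, g ∈ AutP (OrbPart k G) ↔ g ∈ G) ↔
      (∀ U ∈ OrbPart (Fintype.card V) G,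
        qpIter V (Fintype.card V - k) (Fintype.card V) U = U) := by
  classical
  set n := Fintype.card V with hn
  have hkn : k + (n - k) = n := by omega
  -- a full tuple
  obtain ⟨e⟩ : Nonempty (Fin n ≃ V) := ⟨(Fintype.equivFin V).symm⟩
  constructor
  · -- k-closed → orbits are k-full
    intro hclosed U hU
    obtain ⟨α₀, rfl⟩ := hU
    refine Set.Subset.antisymm ?_ (subset_qpIter _ _ _)
    intro α hα
    have hbij0 : Function.Bijective α₀ :=
      (Fintype.bijective_iff_injective_and_card _).mpr ⟨α₀.injective, by simp; exact hn⟩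
    have hbijα : Function.Bijective α :=
      (Fintype.bijective_iff_injective_and_card _).mpr ⟨α.injective, by simp; exact hn⟩
    set e₀ : Fin n ≃ V := Equiv.ofBijective _ hbij0 with he₀
    set eα : Fin n ≃ V := Equiv.ofBijective _ hbijα with heα
    set g : Equiv.Perm V := e₀.symm.trans eα with hgdef
    have hg : ∀ j, g (α₀ j) = α j := by
      intro j
      show eα (e₀.symm (α₀ j)) = α j
      have : e₀.symm (α₀ j) = j := e₀.symm_apply_apply j
      rw [this]; rfl
    have hkey : ∀ β : Tup k V, actTup g β ∈ orbitOf {h | h ∈ G} β := by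
      intro β
      -- u : positions of β inside α₀
      set u : Fin k ↪ Fin n := β.trans ⟨⇑e₀.symm, e₀.symm.injective⟩ with hu
      have hαu : ∀ j, α₀ (u j) = β j := by
        intro j
        show α₀ (e₀.symm (β j)) = β j
        exact e₀.apply_symm_apply (β j)
      set s : Finset (Fin n) := Finset.univ.map u with hs
      have hcard : s.card = k := by simp [hs]
      set w : Fin k ↪o Fin n := s.orderEmbOfFin hcard with hw
      have hmem : ∀ j, u j ∈ s := by intro j; simp [hs]
      have hrange : ∀ j, ∃ y, w y = u j := by
        intro j
        have : (u j : Fin n) ∈ Set.range ⇑w := by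
          rw [Finset.range_orderEmbOfFin]
          exact_mod_cast hmem j
        exact this
      choose p hp using hrange
      have h1 := (mem_qpIter_iff k (n - k) n hkn _ α).mp hα w
      rw [image_trans_orbit] at h1
      obtain ⟨h, hh, hhw⟩ := h1
      -- h agrees with g on the range of β
      have hagree : ∀ y, h (α₀ (w y)) = α (w y) := by
        intro y
        have := congrArg (fun e : Tup k V => (e : Fin k → V) y) hhw
        exact this
      refine ⟨h, hh, ?_⟩
      apply tup_ext
      intro j
      show h (β j) = g (β j)
      rw [← hαu j, hg (u j), ← hp j, hagree (p j), hp j]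
    have hgAut : g ∈ AutP (OrbPart k G) := by
      rintro S ⟨β₀, rfl⟩
      have hsub : actTup g '' orbitOf {h | h ∈ G} β₀ ⊆ orbitOf {h | h ∈ G} β₀ := by
        rintro _ ⟨β, hβ, rfl⟩
        rw [← orbit_eq_of_mem G hβ]
        exact hkey β
      exact Set.eq_of_subset_of_ncard_le hsub
        (Set.ncard_image_of_injective _ (actTup_injective g)).ge (Set.toFinite _)
    have hgG : g ∈ G := (hclosed g).mp hgAut
    exact ⟨g, hgG, tup_ext fun j => hg j⟩
  · -- orbits k-full → k-closed
    intro hfull g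
    constructor
    · intro hgAut
      set α₀ : Tup n V := e.toEmbedding with hα₀
      have hU : orbitOf {h | h ∈ G} α₀ ∈ OrbPart n G := ⟨α₀, rfl⟩
      have hmem : actTup g α₀ ∈ qpIter V (n - k) n (orbitOf {h | h ∈ G} α₀) := by
        rw [mem_qpIter_iff k (n - k) n hkn]
        intro w
        rw [image_trans_orbit]
        have h1 : orbitOf {h | h ∈ G} (w.toEmbedding.trans α₀) ∈ OrbPart k G := ⟨_, rfl⟩
        have h2 := hgAut _ h1
        have h3 : actTup g (w.toEmbedding.trans α₀)
            ∈ orbitOf {h | h ∈ G} (w.toEmbedding.trans α₀) := by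
          rw [← h2]
          exact ⟨_, mem_orbit_self G _, rfl⟩
        exact h3
      rw [hfull _ hU] at hmem
      obtain ⟨h, hh, hhα⟩ := hmem
      have : g = h := by
        ext x
        obtain ⟨j, rfl⟩ : ∃ j, α₀ j = x := ⟨e.symm x, by simp [hα₀]⟩
        have := congrArg (fun e : Tup n V => (e : Fin n → V) j) hhα
        exact this.symm
      rw [this]
      exact hh
    · intro hgG
      exact mem_G_autP G g hgG
end
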